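/- Let X = (Π, V) be an exchangeable random variable with values in M★∞, and let (U_k)_{k≥1} be an i.i.d. sequence of uniform random variables on [0,1], independent of X. For i ∈ ℕ, let k(Π, i) denote the label of the block of Π containing i (blocks labelled in increasing order of their least elements), and set Z_i = (U_{k(Π,i)}, V_i) ∈ [0,1] × [0,∞). Then the sequence (Z_i)_{i≥1} is exchangeable: for every finitely supported permutation σ of ℕ, (Z_{σ(i)})_{i≥1} has the same law as (Z_i)_{i≥1}. -/

import Mathlib

open MeasureTheory ProbabilityTheory Filter Topology

/-- A marked partition of `ℕ`: an equivalence relation together with a mark function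
that is constant on each block. -/
structure MarkedPartition where
  rel : ℕ → ℕ → Prop
  refl : ∀ i, rel i i
  symm : ∀ {i j}, rel i j → rel j i
  trans : ∀ {i j k}, rel i j → rel j k → rel i k
  v : ℕ → ℝ
  consistent : ∀ {i j}, rel i j → v i = v j

namespace MarkedPartition

/-- The σ-algebra on marked partitions, generated by the maps `x ↦ x.rel i j` and `x ↦ x.v i`. -/
instance : MeasurableSpace MarkedPartition :=
  (⨆ (i : ℕ) (j : ℕ), MeasurableSpace.comap (fun x : MarkedPartition => x.rel i j) ⊤) ⊔
    (⨆ i : ℕ, MeasurableSpace.comap (fun x : MarkedPartition => x.v i) (inferInstance))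

/-- Action of a permutation of `ℕ` on marked partitions. -/
def perm (σ : Equiv.Perm ℕ) (x : MarkedPartition) : MarkedPartition where
  rel i j := x.rel (σ i) (σ j)
  refl i := x.refl _
  symm h := x.symm h
  trans h h' := x.trans h h'
  v i := x.v (σ i)
  consistent h := x.consistent h

/-- The block containing `i`. -/
def block (x : MarkedPartition) (i : ℕ) : Set ℕ := {j | x.rel i j}

/-- Non-degenerate: every finite block has mark `0`. -/
def NonDegenerate (x : MarkedPartition) : Prop := ∀ i, (x.block i).Finite → x.v i = 0

/-- Least element of the block containing `i`. -/
noncomputable def leastOf (x : MarkedPartition) (i : ℕ) : ℕ := sInf (x.block i)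

open Classical in
/-- The label of the block of `x` containing `i`, blocks being labelled in increasing
order of their least elements (labels start at `1`). -/
noncomputable def label (x : MarkedPartition) (i : ℕ) : ℕ :=
  ((Finset.range (x.leastOf i + 1)).filter (fun m => x.leastOf m = m)).card

end MarkedPartition

/-- A permutation is finitely supported. -/
def FinSupp (σ : Equiv.Perm ℕ) : Prop := {n | σ n ≠ n}.Finite

/-- Lexicographic order on pairs `(s, v)`. -/
def lexLe (a b : ℝ × ℝ) : Prop := a.1 < b.1 ∨ (a.1 = b.1 ∧ a.2 ≤ b.2)

/-- Membership in the space `Z↓`. -/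
def MemZdown (z : ℕ → ℝ × ℝ) : Prop :=
  (∀ k, (z k).1 ∈ Set.Icc (0:ℝ) 1 ∧ 0 ≤ (z k).2) ∧
  (∀ k, lexLe (z (k + 1)) (z k)) ∧
  (∀ n, ∑ k ∈ Finset.range n, (z k).1 ≤ 1) ∧
  (∀ k, (z k).1 = 0 → (z k).2 = 0)

/-- `t_n = s_1 + … + s_n`. -/
def cumSum (z : ℕ → ℝ × ℝ) (n : ℕ) : ℝ := ∑ k ∈ Finset.range n, (z k).1

open Classical in
/-- Index of the paintbox interval containing `u`, if any. -/
noncomputable def pbIdx (z : ℕ → ℝ × ℝ) (u : ℝ) : Option ℕ :=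
  if h : ∃ n, cumSum z n ≤ u ∧ u < cumSum z (n + 1) then some (Nat.find h) else none

/-- The paintbox marked partition built from `z` and the sequence `u` of uniform samples. -/
noncomputable def paintbox (z : ℕ → ℝ × ℝ) (u : ℕ → ℝ) : MarkedPartition where
  rel i j := i = j ∨ ((pbIdx z (u i)).isSome ∧ pbIdx z (u i) = pbIdx z (u j))
  refl _ := Or.inl rfl
  symm h := by
    rcases h with h | ⟨hs, he⟩
    · exact Or.inl h.symm
    · exact Or.inr ⟨he ▸ hs, he.symm⟩
  trans h h' := by
    rcases h with rfl | ⟨hs, he⟩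
    · exact h'
    · rcases h' with rfl | ⟨hs', he'⟩
      · exact Or.inr ⟨hs, he⟩
      · exact Or.inr ⟨hs, he.trans he'⟩
  v i := (pbIdx z (u i)).elim 0 (fun n => (z n).2)
  consistent h := by
    rcases h with rfl | ⟨hs, he⟩
    · rfl
    · simp only [he]

/-- The uniform distribution on `[0,1]`. -/
noncomputable def uniform01 : Measure ℝ := volume.restrict (Set.Icc 0 1)

/-- `U` is an i.i.d. sequence of uniform random variables on `[0,1]` under `μ`. -/
def IsIIDUniform {Θ : Type*} [MeasurableSpace Θ] (μ : Measure Θ) (U : ℕ → Θ → ℝ) : Prop :=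
  (∀ n, Measurable (U n)) ∧ iIndepFun U μ ∧
    ∀ n, μ.map (U n) = uniform01

/-- The paintbox measure `ρ_z`, the law of the paintbox construction driven by the
i.i.d. uniform sequence `U` defined on `(Θ, μ)`. -/
noncomputable def paintboxLaw {Θ : Type*} [MeasurableSpace Θ] (μ : Measure Θ)
    (U : ℕ → Θ → ℝ) (z : ℕ → ℝ × ℝ) : Measure MarkedPartition :=
  μ.map (fun θ => paintbox z (fun n => U n θ))

open Classical in
/-- `#(B ∩ [n]) / n`. -/
noncomputable def freqAvg (B : Set ℕ) (n : ℕ) : ℝ :=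
  (((Finset.range n).filter (fun j => j ∈ B)).card : ℝ) / n

/-- `B` has an asymptotic frequency. -/
def HasFreq (B : Set ℕ) : Prop := ∃ l : ℝ, Tendsto (freqAvg B) atTop (𝓝 l)

/-- The asymptotic frequency of `B` (junk value if the limit does not exist). -/
noncomputable def freq (B : Set ℕ) : ℝ := limUnder atTop (freqAvg B)

/-- `x` has asymptotic frequencies. -/
def MarkedPartition.HasFreqs (x : MarkedPartition) : Prop := ∀ i, HasFreq (x.block i)

/-- The set of least representatives of infinite blocks of `x` with positive asymptotic
frequency. -/
def MarkedPartition.posReps (x : MarkedPartition) : Set ℕ :=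
  {r | x.leastOf r = r ∧ (x.block r).Infinite ∧ 0 < freq (x.block r)}

/-- `g` is the `⪯`-nonincreasing enumeration `|x|↓` of the pairs
(asymptotic frequency, mark) over the infinite blocks of `x` with positive frequency,
completed by `(0,0)` terms. -/
def IsRankedFreqs (x : MarkedPartition) (g : ℕ → ℝ × ℝ) : Prop :=
  (∀ k, lexLe (g (k + 1)) (g k)) ∧
  ∃ e : ℕ → ℕ, Set.BijOn e {k | g k ≠ (0, 0)} x.posReps ∧
    ∀ k, g k ≠ (0, 0) → g k = (freq (x.block (e k)), x.v (e k))

section Aux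

namespace MarkedPartition

lemma ext' {x y : MarkedPartition} (hrel : x.rel = y.rel) (hv : x.v = y.v) : x = y := by
  cases x; cases y; cases hrel; cases hv; rfl

lemma measurable_rel_apply (i j : ℕ) : Measurable fun x : MarkedPartition => x.rel i j :=
  measurable_iff_comap_le.mpr
    ((le_iSup₂ (f := fun i j : ℕ =>
      MeasurableSpace.comap (fun x : MarkedPartition => x.rel i j) ⊤) i j).trans le_sup_left)

lemma measurableSet_rel (i j : ℕ) : MeasurableSet {x : MarkedPartition | x.rel i j} :=
  measurableSet_setOf.mpr (measurable_rel_apply i j)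

lemma measurable_v_apply (i : ℕ) : Measurable fun x : MarkedPartition => x.v i :=
  measurable_iff_comap_le.mpr
    ((le_iSup (f := fun i : ℕ =>
      MeasurableSpace.comap (fun x : MarkedPartition => x.v i) inferInstance) i).trans le_sup_right)

lemma measurable_mk' {α : Type*} [MeasurableSpace α] {f : α → MarkedPartition}
    (h1 : ∀ i j, MeasurableSet {a | (f a).rel i j})
    (h2 : ∀ i, Measurable fun a => (f a).v i) : Measurable f := by
  rw [measurable_iff_comap_le]
  show MeasurableSpace.comap f (_ ⊔ _) ≤ _
  rw [MeasurableSpace.comap_sup]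
  refine sup_le ?_ ?_
  · rw [MeasurableSpace.comap_iSup]
    refine iSup_le fun i => ?_
    rw [MeasurableSpace.comap_iSup]
    refine iSup_le fun j => ?_
    rw [MeasurableSpace.comap_comp]
    exact measurable_iff_comap_le.mp (measurableSet_setOf.mp (h1 i j))
  · rw [MeasurableSpace.comap_iSup]
    refine iSup_le fun i => ?_
    rw [MeasurableSpace.comap_comp]
    exact measurable_iff_comap_le.mp (h2 i)

lemma measurable_perm (σ : Equiv.Perm ℕ) : Measurable (perm σ) :=
  measurable_mk' (fun i j => measurableSet_rel (σ i) (σ j)) fun i => measurable_v_apply (σ i)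

lemma rel_leastOf (x : MarkedPartition) (i : ℕ) : x.rel i (x.leastOf i) :=
  Nat.sInf_mem (⟨i, x.refl i⟩ : (x.block i).Nonempty)

lemma leastOf_eq_of_rel {x : MarkedPartition} {i j : ℕ} (h : x.rel i j) :
    x.leastOf i = x.leastOf j := by
  have hb : x.block i = x.block j :=
    Set.ext fun m => ⟨fun hm => x.trans (x.symm h) hm, fun hm => x.trans h hm⟩
  unfold leastOf
  rw [hb]

lemma leastOf_leastOf (x : MarkedPartition) (i : ℕ) : x.leastOf (x.leastOf i) = x.leastOf i :=
  (leastOf_eq_of_rel (rel_leastOf x i)).symm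

lemma not_rel_of_lt_leastOf {x : MarkedPartition} {i m : ℕ} (h : m < x.leastOf i) :
    ¬ x.rel i m := fun hm => Nat.notMem_of_lt_sInf h hm

lemma leastOf_eq_iff {x : MarkedPartition} {i n : ℕ} :
    x.leastOf i = n ↔ x.rel i n ∧ ∀ m < n, ¬ x.rel i m := by
  constructor
  · rintro rfl
    exact ⟨rel_leastOf x i, fun m hm => not_rel_of_lt_leastOf hm⟩
  · rintro ⟨h1, h2⟩
    rcases lt_trichotomy (x.leastOf i) n with h | h | h
    · exact absurd (rel_leastOf x i) (h2 _ h)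
    · exact h
    · exact absurd h1 (not_rel_of_lt_leastOf h)

lemma measurable_leastOf (i : ℕ) : Measurable fun x : MarkedPartition => x.leastOf i := by
  apply measurable_to_countable'
  intro n
  have heq : (fun x : MarkedPartition => x.leastOf i) ⁻¹' {n} =
      {x : MarkedPartition | x.rel i n} ∩ ⋂ (m : ℕ), ⋂ (_ : m < n), {x : MarkedPartition | x.rel i m}ᶜ := by
    ext x
    simp only [Set.mem_preimage, Set.mem_singleton_iff, Set.mem_inter_iff, Set.mem_iInter,
      Set.mem_compl_iff, Set.mem_setOf_eq, leastOf_eq_iff]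
  rw [heq]
  exact (measurableSet_rel i n).inter
    (MeasurableSet.iInter fun m => MeasurableSet.iInter fun _ => (measurableSet_rel i m).compl)

open Classical in
lemma label_eq_count (x : MarkedPartition) (i : ℕ) :
    x.label i = Nat.count (fun m => x.leastOf m = m) (x.leastOf i + 1) := by
  rw [Nat.count_eq_card_filter_range, label]

open Classical in
lemma measurable_count_fix (n : ℕ) :
    Measurable fun x : MarkedPartition => Nat.count (fun m => x.leastOf m = m) n := by
  induction n with
  | zero => simpa using measurable_const
  | succ n ih =>
    simp only [Nat.count_succ]
    refine ih.add (Measurable.ite ?_ measurable_const measurable_const)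
    exact (measurable_leastOf n) (measurableSet_singleton n)

lemma measurable_label (i : ℕ) : Measurable fun x : MarkedPartition => x.label i := by
  apply measurable_to_countable'
  intro c
  classical
  have heq : (fun x : MarkedPartition => x.label i) ⁻¹' {c} =
      ⋃ n : ℕ, (((fun x : MarkedPartition => x.leastOf i) ⁻¹' {n}) ∩
        ((fun x : MarkedPartition => Nat.count (fun m => x.leastOf m = m) (n + 1)) ⁻¹' {c})) := by
    ext x
    simp only [Set.mem_preimage, Set.mem_singleton_iff, Set.mem_iUnion, Set.mem_inter_iff,
      label_eq_count]
    constructor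
    · intro h
      exact ⟨x.leastOf i, rfl, h⟩
    · rintro ⟨n, rfl, h⟩
      exact h
  rw [heq]
  exact MeasurableSet.iUnion fun n =>
    ((measurable_leastOf i) (measurableSet_singleton n)).inter
      ((measurable_count_fix (n + 1)) (measurableSet_singleton c))

lemma label_eq_of_rel {x : MarkedPartition} {i j : ℕ} (h : x.rel i j) : x.label i = x.label j := by
  unfold label
  rw [leastOf_eq_of_rel h]

open Classical in
lemma label_lt_label {x : MarkedPartition} {i j : ℕ} (h : x.leastOf i < x.leastOf j) :
    x.label i < x.label j := by
  rw [label_eq_count, label_eq_count]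
  calc Nat.count (fun m => x.leastOf m = m) (x.leastOf i + 1)
      ≤ Nat.count (fun m => x.leastOf m = m) (x.leastOf j) := Nat.count_monotone _ h
    _ < Nat.count (fun m => x.leastOf m = m) (x.leastOf j + 1) :=
        Nat.count_lt_count_succ_iff.mpr (leastOf_leastOf x j)

lemma rel_of_label_eq {x : MarkedPartition} {i j : ℕ} (h : x.label i = x.label j) : x.rel i j := by
  have hle : x.leastOf i = x.leastOf j := by
    rcases lt_trichotomy (x.leastOf i) (x.leastOf j) with hlt | he | hlt
    · exact absurd h (Nat.ne_of_lt (label_lt_label hlt))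
    · exact he
    · exact absurd h.symm (Nat.ne_of_lt (label_lt_label hlt))
  have hj : x.rel j (x.leastOf i) := by
    rw [hle]
    exact rel_leastOf x j
  exact x.trans (rel_leastOf x i) (x.symm hj)

open Classical in
lemma label_pos (x : MarkedPartition) (i : ℕ) : 1 ≤ x.label i := by
  rw [label_eq_count]
  have h := (Nat.count_lt_count_succ_iff (p := fun m => x.leastOf m = m)
    (n := x.leastOf i)).mpr (leastOf_leastOf x i)
  omega

open Classical in
lemma exists_label_eq {x : MarkedPartition} {i c : ℕ} (hc1 : 1 ≤ c) (hc2 : c ≤ x.label i) :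
    ∃ j, x.label j = c := by
  set p := fun m => x.leastOf m = m with hp
  have hcard : ∀ hf : (setOf p).Finite, c - 1 < hf.toFinset.card := by
    intro hf
    have h1 : Nat.count p (x.leastOf i + 1) ≤ hf.toFinset.card := Nat.count_le_card hf _
    have h2 : c ≤ Nat.count p (x.leastOf i + 1) := by
      rw [label_eq_count] at hc2
      exact hc2
    omega
  refine ⟨Nat.nth p (c - 1), ?_⟩
  have hpm : p (Nat.nth p (c - 1)) := Nat.nth_mem _ hcard
  rw [label_eq_count]
  have hfix : x.leastOf (Nat.nth p (c - 1)) = Nat.nth p (c - 1) := hpm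
  rw [hfix, Nat.count_succ, if_pos hpm, Nat.count_nth hcard]
  omega

lemma exists_ge_label_iff (x : MarkedPartition) (k : ℕ) :
    (∃ i, k ≤ x.label i) ↔ ∃ f : Fin k → ℕ, ∀ a b : Fin k, a ≠ b → ¬ x.rel (f a) (f b) := by
  rcases Nat.eq_zero_or_pos k with rfl | hk
  · exact ⟨fun _ => ⟨fun a => a.elim0, fun a => a.elim0⟩, fun _ => ⟨0, Nat.zero_le _⟩⟩
  constructor
  · rintro ⟨i, hi⟩
    have hex : ∀ a : Fin k, ∃ j, x.label j = (a : ℕ) + 1 := by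
      intro a
      refine exists_label_eq (i := i) (Nat.succ_le_succ (Nat.zero_le _)) ?_
      have ha := a.isLt
      omega
    choose f hf using hex
    refine ⟨f, fun a b hab hrel => hab ?_⟩
    have h := label_eq_of_rel hrel
    rw [hf a, hf b] at h
    exact Fin.ext (by omega)
  · rintro ⟨f, hf⟩
    by_contra hcon
    push_neg at hcon
    have hinj : Function.Injective fun a : Fin k => x.label (f a) := by
      intro a b hab
      by_contra hne
      exact hf a b hne (rel_of_label_eq hab)
    have hmaps : ∀ a ∈ (Finset.univ : Finset (Fin k)),
        x.label (f a) ∈ Finset.Ico 1 k := fun a _ =>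
      Finset.mem_Ico.mpr ⟨label_pos x _, hcon _⟩
    have hcardle := Finset.card_le_card_of_injOn (fun a : Fin k => x.label (f a)) hmaps hinj.injOn
    simp only [Finset.card_univ, Fintype.card_fin, Nat.card_Ico] at hcardle
    omega

lemma exists_label_perm (σ : Equiv.Perm ℕ) (x : MarkedPartition) {k : ℕ}
    (h : ∃ i, x.label i = k) : ∃ i, (x.perm σ).label i = k := by
  obtain ⟨i, hi⟩ := h
  have hk1 : 1 ≤ k := hi ▸ label_pos x i
  have h1 : ∃ i, k ≤ x.label i := ⟨i, hi.ge⟩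
  rw [exists_ge_label_iff] at h1
  obtain ⟨f, hf⟩ := h1
  have h2 : ∃ i, k ≤ (x.perm σ).label i := by
    rw [exists_ge_label_iff]
    refine ⟨fun a => σ⁻¹ (f a), fun a b hab => ?_⟩
    have hiff : (x.perm σ).rel (σ⁻¹ (f a)) (σ⁻¹ (f b)) ↔ x.rel (f a) (f b) := by
      show x.rel (σ (σ⁻¹ (f a))) (σ (σ⁻¹ (f b))) ↔ _
      rw [show ∀ n, σ (σ⁻¹ n) = n from σ.apply_symm_apply, show ∀ n, σ (σ⁻¹ n) = n from σ.apply_symm_apply]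
    rw [hiff]
    exact hf a b hab
  obtain ⟨i', hi'⟩ := h2
  exact exists_label_eq hk1 hi'

lemma perm_perm_inv (σ : Equiv.Perm ℕ) (x : MarkedPartition) : (x.perm σ).perm σ⁻¹ = x := by
  refine ext' ?_ ?_
  · funext i j
    show (x.rel (σ (σ⁻¹ i)) (σ (σ⁻¹ j)) : Prop) = (x.rel i j : Prop)
    rw [show ∀ n, σ (σ⁻¹ n) = n from σ.apply_symm_apply, show ∀ n, σ (σ⁻¹ n) = n from σ.apply_symm_apply]
  · funext i
    show x.v (σ (σ⁻¹ i)) = x.v i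
    rw [show ∀ n, σ (σ⁻¹ n) = n from σ.apply_symm_apply]

lemma exists_label_perm_iff (σ : Equiv.Perm ℕ) (x : MarkedPartition) (k : ℕ) :
    (∃ i, (x.perm σ).label i = k) ↔ ∃ i, x.label i = k := by
  constructor
  · intro h
    have h2 := exists_label_perm σ⁻¹ (x.perm σ) h
    rwa [perm_perm_inv σ x] at h2
  · exact exists_label_perm σ x

open Classical in
/-- The relabelling permutation: `tau σ x` maps the label of the block of `x.perm σ`
containing `i` to the label of the block of `x` containing `σ i`. -/
noncomputable def tau (σ : Equiv.Perm ℕ) (x : MarkedPartition) (k : ℕ) : ℕ :=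
  if h : ∃ i, (x.perm σ).label i = k then x.label (σ (Nat.find h)) else k

open Classical in
lemma tau_label (σ : Equiv.Perm ℕ) (x : MarkedPartition) (i : ℕ) :
    tau σ x ((x.perm σ).label i) = x.label (σ i) := by
  have h : ∃ i', (x.perm σ).label i' = (x.perm σ).label i := ⟨i, rfl⟩
  rw [tau, dif_pos h]
  have hrel : (x.perm σ).rel (Nat.find h) i := rel_of_label_eq (Nat.find_spec h)
  exact label_eq_of_rel (hrel : x.rel (σ (Nat.find h)) (σ i))

open Classical in
lemma tau_injective (σ : Equiv.Perm ℕ) (x : MarkedPartition) : Function.Injective (tau σ x) := by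
  intro k k' h
  rw [tau, tau] at h
  by_cases h1 : ∃ i, (x.perm σ).label i = k <;> by_cases h2 : ∃ i, (x.perm σ).label i = k'
  · rw [dif_pos h1, dif_pos h2] at h
    have hr' : x.rel (σ (Nat.find h1)) (σ (Nat.find h2)) := rel_of_label_eq h
    have hr : (x.perm σ).rel (Nat.find h1) (Nat.find h2) := hr'
    have hl := label_eq_of_rel hr
    rw [Nat.find_spec h1, Nat.find_spec h2] at hl
    exact hl
  · rw [dif_pos h1, dif_neg h2] at h
    exact absurd ((exists_label_perm_iff σ x k').mpr ⟨σ (Nat.find h1), h⟩) h2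
  · rw [dif_neg h1, dif_pos h2] at h
    exact absurd ((exists_label_perm_iff σ x k).mpr ⟨σ (Nat.find h2), h.symm⟩) h1
  · rw [dif_neg h1, dif_neg h2] at h
    exact h

open Classical in
lemma measurable_tau (σ : Equiv.Perm ℕ) (k : ℕ) :
    Measurable fun x : MarkedPartition => tau σ x k := by
  apply measurable_to_countable'
  intro n
  have heq : (fun x : MarkedPartition => tau σ x k) ⁻¹' {n} =
      (⋃ i : ℕ, (({x : MarkedPartition | (x.perm σ).label i = k} ∩
        ⋂ (j : ℕ), ⋂ (_ : j < i), {x : MarkedPartition | (x.perm σ).label j = k}ᶜ) ∩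
        {x : MarkedPartition | x.label (σ i) = n})) ∪
      ((⋂ i : ℕ, {x : MarkedPartition | (x.perm σ).label i = k}ᶜ) ∩
        {_x : MarkedPartition | k = n}) := by
    ext x
    simp only [Set.mem_preimage, Set.mem_singleton_iff, Set.mem_union, Set.mem_iUnion,
      Set.mem_inter_iff, Set.mem_iInter, Set.mem_compl_iff, Set.mem_setOf_eq]
    constructor
    · intro htau
      by_cases h : ∃ i, (x.perm σ).label i = k
      · left
        refine ⟨Nat.find h, ⟨⟨Nat.find_spec h, fun j hj => Nat.find_min h hj⟩, ?_⟩⟩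
        rw [tau, dif_pos h] at htau
        exact htau
      · right
        rw [tau, dif_neg h] at htau
        exact ⟨fun i hi => h ⟨i, hi⟩, htau⟩
    · rintro (⟨i, ⟨⟨hik, hmin⟩, hlab⟩⟩ | ⟨hall, rfl⟩)
      · have h : ∃ i, (x.perm σ).label i = k := ⟨i, hik⟩
        have hfind : Nat.find h = i := by
          refine le_antisymm (Nat.find_le hik) ?_
          by_contra hlt
          push_neg at hlt
          exact hmin _ hlt (Nat.find_spec h)
        rw [tau, dif_pos h, hfind]
        exact hlab
      · rw [tau, dif_neg fun ⟨i, hi⟩ => hall i hi]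
  rw [heq]
  refine MeasurableSet.union ?_ ?_
  · refine MeasurableSet.iUnion fun i => ?_
    refine MeasurableSet.inter (MeasurableSet.inter ?_ ?_) ?_
    · exact ((measurable_label i).comp (measurable_perm σ)) (measurableSet_singleton k)
    · exact MeasurableSet.iInter fun j => MeasurableSet.iInter fun _ =>
        (((measurable_label j).comp (measurable_perm σ)) (measurableSet_singleton k)).compl
    · exact (measurable_label (σ i)) (measurableSet_singleton n)
  · exact (MeasurableSet.iInter fun i =>
      (((measurable_label i).comp (measurable_perm σ)) (measurableSet_singleton k)).compl).inter
      (MeasurableSet.const _)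

end MarkedPartition

instance uniform01.isProbabilityMeasure : IsProbabilityMeasure uniform01 := by
  constructor
  rw [uniform01, Measure.restrict_apply MeasurableSet.univ, Set.univ_inter, Real.volume_Icc]
  norm_num

lemma map_restrict_eq_pi {Ω : Type*} [MeasurableSpace Ω] (P : Measure Ω) [IsProbabilityMeasure P]
    (U : ℕ → Ω → ℝ) (hU : IsIIDUniform P U) {τ : ℕ → ℕ} (hτ : Function.Injective τ)
    (t : Finset ℕ) :
    P.map (fun ω (i : t) => U (τ i) ω) = Measure.pi fun _ : t => uniform01 := by
  classical
  obtain ⟨hUm, hUind, hUlaw⟩ := hU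
  have hsingle : ∀ (n : ℕ) (A : Set ℝ), MeasurableSet A → P (U n ⁻¹' A) = uniform01 A := by
    intro n A hA
    rw [← hUlaw n, Measure.map_apply (hUm n) hA]
  have hmeas : Measurable fun ω (i : t) => U (τ i) ω :=
    measurable_pi_lambda _ fun i => hUm (τ i)
  symm
  apply Measure.pi_eq
  intro s hs
  rw [Measure.map_apply hmeas (MeasurableSet.univ_pi hs)]
  set sets : ℕ → Set ℝ := fun j => ⋃ (i : t) (_ : τ i = j), s i with hsets
  have hsets_meas : ∀ j, MeasurableSet (sets j) := fun j =>
    MeasurableSet.iUnion fun i => MeasurableSet.iUnion fun _ => hs i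
  have hsets_apply : ∀ i : t, sets (τ i) = s i := by
    intro i
    apply Set.Subset.antisymm
    · refine Set.iUnion_subset fun i' => Set.iUnion_subset fun hi' => ?_
      have hii : i' = i := Subtype.ext (hτ hi')
      rw [hii]
    · exact Set.subset_iUnion₂ (s := fun (i' : t) (_ : τ i' = τ i) => s i') i rfl
  have hpre : (fun ω (i : t) => U (τ i) ω) ⁻¹' Set.pi Set.univ s =
      ⋂ j ∈ t.image τ, U j ⁻¹' sets j := by
    rw [Finset.set_biInter_finset_image]
    ext ω
    simp only [Set.mem_preimage, Set.mem_pi, Set.mem_univ, forall_true_left, Set.mem_iInter]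
    constructor
    · intro h i hi
      rw [hsets_apply ⟨i, hi⟩]
      exact h ⟨i, hi⟩
    · intro h i
      have hh := h (i : ℕ) i.2
      rwa [hsets_apply i] at hh
  rw [hpre]
  calc P (⋂ j ∈ t.image τ, U j ⁻¹' sets j)
      = ∏ j ∈ t.image τ, P (U j ⁻¹' sets j) :=
        hUind.measure_inter_preimage_eq_mul _ fun j _ => hsets_meas j
    _ = ∏ i ∈ t, P (U (τ i) ⁻¹' sets (τ i)) := Finset.prod_image fun a _ b _ h => hτ h
    _ = ∏ i : t, P (U (τ i) ⁻¹' sets (τ i)) :=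
        (Finset.prod_coe_sort t fun j => P (U (τ j) ⁻¹' sets (τ j))).symm
    _ = ∏ i : t, uniform01 (s i) := by
        refine Finset.prod_congr rfl fun i _ => ?_
        rw [hsets_apply i]
        exact hsingle (τ i) (s i) (hs i)

lemma map_comp_eq_map {Ω : Type*} [MeasurableSpace Ω] (P : Measure Ω) [IsProbabilityMeasure P]
    (U : ℕ → Ω → ℝ) (hU : IsIIDUniform P U) {τ : ℕ → ℕ} (hτ : Function.Injective τ) :
    P.map (fun ω (k : ℕ) => U (τ k) ω) = P.map fun ω (k : ℕ) => U k ω := by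
  have hUm := hU.1
  have hm1 : Measurable fun ω (k : ℕ) => U (τ k) ω := measurable_pi_lambda _ fun k => hUm (τ k)
  have hm2 : Measurable fun ω (k : ℕ) => U k ω := measurable_pi_lambda _ fun k => hUm k
  haveI : IsProbabilityMeasure (P.map fun ω (k : ℕ) => U (τ k) ω) :=
    Measure.isProbabilityMeasure_map hm1.aemeasurable
  refine ext_of_generate_finite (measurableCylinders fun _ : ℕ => ℝ)
    generateFrom_measurableCylinders.symm isPiSystem_measurableCylinders ?_ ?_
  · intro s hs
    obtain ⟨t, S, hS, rfl⟩ := (mem_measurableCylinders s).mp hs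
    rw [Measure.map_apply hm1 (hS.cylinder), Measure.map_apply hm2 (hS.cylinder)]
    have h1 : (fun ω (k : ℕ) => U (τ k) ω) ⁻¹' cylinder t S =
        (fun ω (i : t) => U (τ i) ω) ⁻¹' S := rfl
    have h2 : (fun ω (k : ℕ) => U k ω) ⁻¹' cylinder t S =
        (fun ω (i : t) => U (i : ℕ) ω) ⁻¹' S := rfl
    have e1 : P.map (fun ω (i : t) => U (τ i) ω) = Measure.pi fun _ : t => uniform01 :=
      map_restrict_eq_pi P U hU hτ t
    have e2 : P.map (fun ω (i : t) => U (i : ℕ) ω) = Measure.pi fun _ : t => uniform01 :=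
      map_restrict_eq_pi P U hU (fun _ _ h => h) t
    rw [h1, h2, ← Measure.map_apply (measurable_pi_lambda _ fun i : t => hUm (τ i)) hS,
      ← Measure.map_apply (measurable_pi_lambda _ fun i : t => hUm (i : ℕ)) hS, e1, e2]
  · rw [Measure.map_apply hm1 MeasurableSet.univ, Measure.map_apply hm2 MeasurableSet.univ,
      Set.preimage_univ, Set.preimage_univ]

lemma map_precomp_eq {Ω : Type*} [MeasurableSpace Ω] (P : Measure Ω) [IsProbabilityMeasure P]
    (U : ℕ → Ω → ℝ) (hU : IsIIDUniform P U) {τ : ℕ → ℕ} (hτ : Function.Injective τ) :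
    (P.map fun ω (k : ℕ) => U k ω).map (fun u => u ∘ τ) = P.map fun ω (k : ℕ) => U k ω := by
  have hprecomp : Measurable fun u : ℕ → ℝ => u ∘ τ :=
    measurable_pi_lambda _ fun k => measurable_pi_apply (τ k)
  rw [Measure.map_map hprecomp (measurable_pi_lambda _ fun k => hU.1 k)]
  exact map_comp_eq_map P U hU hτ

end Aux

/-- **Exchangeability of the sequence `Z_i = (U_{k(Π,i)}, V_i)`.**
If `X = (Π, V)` is an exchangeable random marked partition with values in `M★∞` and
`(U_k)` is an i.i.d. sequence of uniforms independent of `X`, then the sequence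
`Z_i = (U_{k(Π,i)}, V_i)` is exchangeable. -/
theorem Z_sequence_exchangeable
    {Ω : Type} [MeasurableSpace Ω] (P : Measure Ω) [IsProbabilityMeasure P]
    (X : Ω → MarkedPartition) (hXm : Measurable X)
    (hval : ∀ ω, (∀ i, 0 ≤ (X ω).v i) ∧ (X ω).NonDegenerate)
    (hexch : ∀ σ : Equiv.Perm ℕ, FinSupp σ →
      P.map (fun ω => (X ω).perm σ) = P.map X)
    (U : ℕ → Ω → ℝ) (hU : IsIIDUniform P U)
    (hindep : IndepFun (fun ω (n : ℕ) => U n ω) X P) :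
    ∀ σ : Equiv.Perm ℕ, FinSupp σ →
      P.map (fun ω (i : ℕ) => (U ((X ω).label (σ i)) ω, (X ω).v (σ i))) =
        P.map (fun ω (i : ℕ) => (U ((X ω).label i) ω, (X ω).v i)) := by
  intro σ hσ
  classical
  have hUm := hU.1
  have hUvecm : Measurable fun ω (k : ℕ) => U k ω := measurable_pi_lambda _ fun k => hUm k
  set Uvec : Ω → ℕ → ℝ := fun ω (k : ℕ) => U k ω with hUvec_def
  set Φ : MarkedPartition × (ℕ → ℝ) → ℕ → ℝ × ℝ :=
    fun p i => (p.2 (p.1.label i), p.1.v i) with hΦ_def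
  set Θ : MarkedPartition × (ℕ → ℝ) → MarkedPartition × (ℕ → ℝ) :=
    fun p => (p.1.perm σ, p.2 ∘ MarkedPartition.tau σ p.1) with hΘ_def
  have heval : Measurable fun q : (ℕ → ℝ) × ℕ => q.1 q.2 :=
    measurable_from_prod_countable_left fun n => measurable_pi_apply n
  have hΦm : Measurable Φ := by
    rw [hΦ_def]
    refine measurable_pi_lambda _ fun i => Measurable.prod ?_ ?_
    · exact heval.comp
        (measurable_snd.prodMk ((MarkedPartition.measurable_label i).comp measurable_fst))
    · exact (MarkedPartition.measurable_v_apply i).comp measurable_fst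
  have hΘm : Measurable Θ := by
    rw [hΘ_def]
    refine Measurable.prod ?_ ?_
    · exact (MarkedPartition.measurable_perm σ).comp measurable_fst
    · refine measurable_pi_lambda _ fun k => ?_
      exact heval.comp
        (measurable_snd.prodMk ((MarkedPartition.measurable_tau σ k).comp measurable_fst))
  have hpairm : Measurable fun ω => (X ω, Uvec ω) := hXm.prodMk hUvecm
  set μX : Measure MarkedPartition := P.map X with hμX
  set μU : Measure (ℕ → ℝ) := P.map Uvec with hμU
  haveI : IsProbabilityMeasure μX := Measure.isProbabilityMeasure_map hXm.aemeasurable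
  haveI : IsProbabilityMeasure μU := Measure.isProbabilityMeasure_map hUvecm.aemeasurable
  have hpair : P.map (fun ω => (X ω, Uvec ω)) = μX.prod μU :=
    (indepFun_iff_map_prod_eq_prod_map_map hXm.aemeasurable hUvecm.aemeasurable).mp hindep.symm
  have hU_tau : ∀ x : MarkedPartition, μU.map (fun u => u ∘ MarkedPartition.tau σ x) = μU :=
    fun x => map_precomp_eq P U hU (MarkedPartition.tau_injective σ x)
  have hperm_law : μX.map (MarkedPartition.perm σ) = μX := by
    rw [hμX, Measure.map_map (MarkedPartition.measurable_perm σ) hXm]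
    exact hexch σ hσ
  have hΘ_law : (μX.prod μU).map Θ = μX.prod μU := by
    refine Eq.symm (Measure.prod_eq fun B A hB hA => ?_)
    rw [Measure.map_apply hΘm (hB.prod hA), Measure.prod_apply (hΘm (hB.prod hA))]
    have hslice : ∀ x : MarkedPartition,
        μU (Prod.mk x ⁻¹' (Θ ⁻¹' B ×ˢ A)) =
          (MarkedPartition.perm σ ⁻¹' B).indicator (fun _ => μU A) x := by
      intro x
      by_cases hx : x.perm σ ∈ B
      · have hset : Prod.mk x ⁻¹' (Θ ⁻¹' B ×ˢ A) =
            (fun u : ℕ → ℝ => u ∘ MarkedPartition.tau σ x) ⁻¹' A := by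
          ext u
          simp [hΘ_def, hx]
        have hpc : Measurable fun u : ℕ → ℝ => u ∘ MarkedPartition.tau σ x :=
          measurable_pi_lambda _ fun k => measurable_pi_apply _
        rw [hset, ← Measure.map_apply hpc hA, hU_tau x,
          Set.indicator_of_mem (show x ∈ MarkedPartition.perm σ ⁻¹' B from hx)]
      · have hset : Prod.mk x ⁻¹' (Θ ⁻¹' B ×ˢ A) = (∅ : Set (ℕ → ℝ)) := by
          ext u
          simp [hΘ_def, hx]
        rw [hset, Set.indicator_of_notMem (show x ∉ MarkedPartition.perm σ ⁻¹' B from hx),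
          measure_empty]
    rw [lintegral_congr hslice,
      lintegral_indicator ((MarkedPartition.measurable_perm σ) hB) fun _ => μU A,
      setLIntegral_const, ← Measure.map_apply (MarkedPartition.measurable_perm σ) hB, hperm_law,
      mul_comm]
  have hkey : (fun ω (i : ℕ) => (U ((X ω).label (σ i)) ω, (X ω).v (σ i)))
      = Φ ∘ Θ ∘ fun ω => (X ω, Uvec ω) := by
    funext ω i
    show (U ((X ω).label (σ i)) ω, (X ω).v (σ i)) = Φ (Θ (X ω, Uvec ω)) i
    rw [hΘ_def, hΦ_def]
    show (U ((X ω).label (σ i)) ω, (X ω).v (σ i)) =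
      ((Uvec ω ∘ MarkedPartition.tau σ (X ω)) (((X ω).perm σ).label i), ((X ω).perm σ).v i)
    rw [Function.comp_apply, MarkedPartition.tau_label σ (X ω) i]
    rfl
  have hkey2 : (fun ω (i : ℕ) => (U ((X ω).label i) ω, (X ω).v i))
      = Φ ∘ fun ω => (X ω, Uvec ω) := by
    funext ω i
    rw [hΦ_def]
    rfl
  rw [hkey, hkey2]
  have hsplit : P.map (Φ ∘ Θ ∘ fun ω => (X ω, Uvec ω)) =
      ((P.map fun ω => (X ω, Uvec ω)).map Θ).map Φ := by
    rw [Measure.map_map hΘm hpairm, Measure.map_map hΦm (hΘm.comp hpairm)]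
  rw [hsplit, hpair, hΘ_law, ← hpair, Measure.map_map hΦm hpairm]
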